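/- Multi-agent dependency semantics: for finite sets C = {c_1,...,c_n}, D = {d_1,...,d_m} and agent i, the formula Kv_i(C,D) := [c_1]...[c_n](Kv_i(d_1) ∧ ... ∧ Kv_i(d_m)) satisfies: M,s ⊨ Kv_i(C,D) iff for all t ∈ S, if s ~_i t and V(s,c)=V(t,c) for all c ∈ C, then V(s,d)=V(t,d) for all d ∈ D. -/

import Mathlib

structure MAModel (Cst I : Type) where
  S : Type
  D : Type
  S_ne : Nonempty S
  D_ne : Nonempty D
  V : S → Cst → D
  R : I → S → S → Prop
  R_equiv : ∀ i, Equivalence (R i)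

inductive MForm (Cst I : Type) : Type where
  | top  : MForm Cst I
  | neg  : MForm Cst I → MForm Cst I
  | conj : MForm Cst I → MForm Cst I → MForm Cst I
  | Kv   : I → Cst → MForm Cst I
  | box  : Cst → MForm Cst I → MForm Cst I

def MAModel.restrict {Cst I} (M : MAModel Cst I) (s : M.S) (c : Cst) : MAModel Cst I where
  S := { t : M.S // M.V s c = M.V t c }
  D := M.D
  S_ne := ⟨⟨s, rfl⟩⟩
  D_ne := M.D_ne
  V := fun t d => M.V t.1 d
  R := fun i t u => M.R i t.1 u.1
  R_equiv := fun i => ⟨fun _ => (M.R_equiv i).refl _,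
    fun h => (M.R_equiv i).symm h, fun h h' => (M.R_equiv i).trans h h'⟩

def MSat {Cst I} : (M : MAModel Cst I) → M.S → MForm Cst I → Prop
  | _, _, .top => True
  | M, s, .neg φ => ¬ MSat M s φ
  | M, s, .conj φ ψ => MSat M s φ ∧ MSat M s ψ
  | M, s, .Kv i c => ∀ t : M.S, M.R i s t → M.V s c = M.V t c
  | M, s, .box c φ => MSat (M.restrict s c) ⟨s, rfl⟩ φ

def mBoxList {Cst I : Type} (l : List Cst) (φ : MForm Cst I) : MForm Cst I := l.foldr MForm.box φ

def mKvConj {Cst I : Type} (i : I) (l : List Cst) : MForm Cst I :=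
  l.foldr (fun d ψ => MForm.conj (MForm.Kv i d) ψ) MForm.top


theorem mKvConj_sem {Cst I : Type} (M : MAModel Cst I) (s : M.S) (i : I) (lD : List Cst) :
    MSat M s (mKvConj i lD) ↔ ∀ t : M.S, M.R i s t → ∀ d ∈ lD, M.V s d = M.V t d := by
  induction lD with
  | nil => simp [mKvConj, MSat]
  | cons d l ih =>
    simp only [mKvConj, List.foldr] at ih ⊢
    show (MSat M s (.Kv i d) ∧ _) ↔ _
    rw [ih]
    constructor
    · rintro ⟨h1, h2⟩ t ht e he
      rcases List.mem_cons.1 he with rfl | he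
      · exact h1 t ht
      · exact h2 t ht e he
    · intro h
      exact ⟨fun t ht => h t ht d (List.mem_cons_self),
        fun t ht e he => h t ht e (List.mem_cons_of_mem _ he)⟩

theorem mBox_sem {Cst I : Type} (M : MAModel Cst I) (s : M.S) (i : I) (lC lD : List Cst) :
    MSat M s (mBoxList lC (mKvConj i lD)) ↔
      ∀ t : M.S, M.R i s t → (∀ c ∈ lC, M.V s c = M.V t c) →
        ∀ d ∈ lD, M.V s d = M.V t d := by
  induction lC generalizing M s with
  | nil =>
    rw [show mBoxList [] (mKvConj i lD) = mKvConj i lD from rfl, mKvConj_sem]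
    simp
  | cons c l ih =>
    show MSat (M.restrict s c) ⟨s, rfl⟩ (mBoxList l (mKvConj i lD)) ↔ _
    refine (ih (M.restrict s c) ⟨s, rfl⟩).trans ?_
    constructor
    · intro h t ht he
      exact h ⟨t, he c (List.mem_cons_self)⟩ ht
        (fun c' hc' => he c' (List.mem_cons_of_mem _ hc'))
    · intro h t ht he
      refine h t.1 ht (fun c' hc' => ?_)
      rcases List.mem_cons.1 hc' with rfl | hc'
      · exact t.2
      · exact he c' hc'

/-- Semantics of the multi-agent dependency operator Kv_i(C,D), for any enumerations. -/
theorem mKvDep_semantics {Cst I : Type} [DecidableEq Cst] (M : MAModel Cst I) (s : M.S) (i : I)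
    (C D : Finset Cst) (lC lD : List Cst) (hC : lC.toFinset = C) (hD : lD.toFinset = D) :
    MSat M s (mBoxList lC (mKvConj i lD)) ↔
      ∀ t : M.S, M.R i s t → (∀ c ∈ C, M.V s c = M.V t c) →
        ∀ d ∈ D, M.V s d = M.V t d := by
  subst hC hD
  rw [mBox_sem]
  simp
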